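/- As k → ∞ through the positive integers, s_k = 1 − √(2/k) + 2/k + O(k^{−3/2}) and t_k = 1 + √(2/k) + 2/k + O(k^{−3/2}); that is, the sequences s_k − (1 − √(2/k) + 2/k) and t_k − (1 + √(2/k) + 2/k) are O(k^{−3/2}). -/

import Mathlib

/-- `s_k`, the square root of the left Mhaskar–Rakhmanov–Saff number. -/
noncomputable def sK (k : ℕ) : ℝ :=
  Real.exp ((2 * (k : ℝ) + 1) / (k : ℝ) ^ 2) -
    Real.sqrt (Real.exp ((4 * (k : ℝ) + 2) / (k : ℝ) ^ 2) - Real.exp (2 / (k : ℝ)))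

/-- `t_k`, the square root of the right Mhaskar–Rakhmanov–Saff number. -/
noncomputable def tK (k : ℕ) : ℝ :=
  Real.exp ((2 * (k : ℝ) + 1) / (k : ℝ) ^ 2) +
    Real.sqrt (Real.exp ((4 * (k : ℝ) + 2) / (k : ℝ) ^ 2) - Real.exp (2 / (k : ℝ)))

/-- The left edge `a_k = s_k²` of the support of the equilibrium measure. -/
noncomputable def aK (k : ℕ) : ℝ := (sK k) ^ 2

/-- The right edge `b_k = t_k²` of the support of the equilibrium measure. -/
noncomputable def bK (k : ℕ) : ℝ := (tK k) ^ 2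

/-- The density `ψ_k` of the equilibrium measure for the Stieltjes–Wigert-type weight. -/
noncomputable def psiK (k : ℕ) (x : ℝ) : ℝ :=
  ((k : ℝ) ^ 2 / (2 * Real.pi * x)) *
    Real.arctan (Real.sqrt ((bK k - x) * (x - aK k)) / (Real.sqrt (aK k * bK k) + x))

lemma exp_quad {x : ℝ} (h0 : 0 ≤ x) (h1 : x ≤ 1/2) : Real.exp x ≤ 1 + x + 2*x^2 := by
  have h := Real.exp_bound_div_one_sub_of_interval h0 (by linarith)
  have hx : (0:ℝ) < 1 - x := by linarith
  have : 1/(1-x) ≤ 1 + x + 2*x^2 := by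
    rw [div_le_iff₀ hx]; nlinarith
  linarith

lemma aux_E {u : ℝ} (hu0 : 0 < u) (hu35 : 35*u ≤ 1) :
    |Real.exp (2*u + u^2) - (1 + 2*u)| ≤ 19*(u*Real.sqrt u) := by
  have hu1 : u ≤ 1 := by nlinarith
  have hx0 : (0:ℝ) ≤ 2*u + u^2 := by positivity
  have hxhalf : 2*u + u^2 ≤ 1/2 := by nlinarith
  have hElo : (2*u + u^2) + 1 ≤ Real.exp (2*u + u^2) := Real.add_one_le_exp _
  have hEhi : Real.exp (2*u + u^2) ≤ 1 + (2*u + u^2) + 2*(2*u + u^2)^2 :=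
    exp_quad hx0 hxhalf
  have husu : u ≤ Real.sqrt u := by
    rw [Real.le_sqrt hu0.le hu0.le]; nlinarith
  have hsu0 : 0 < Real.sqrt u := Real.sqrt_pos.mpr hu0
  rw [abs_le]
  constructor <;> nlinarith

set_option maxHeartbeats 1000000 in
lemma aux_R {u : ℝ} (hu0 : 0 < u) (hu35 : 35*u ≤ 1) :
    |Real.sqrt (Real.exp (2*u + (2*u + 2*u^2)) - Real.exp (2*u)) - Real.sqrt (2*u)| ≤
      11*(u*Real.sqrt u) := by
  have hu1 : u ≤ 1 := by nlinarith
  have hy0 : (0:ℝ) ≤ 2*u + 2*u^2 := by positivity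
  have hyhalf : 2*u + 2*u^2 ≤ 1/2 := by nlinarith
  have hylo : (2*u + 2*u^2) + 1 ≤ Real.exp (2*u + 2*u^2) := Real.add_one_le_exp _
  have hyhi : Real.exp (2*u + 2*u^2) ≤ 1 + (2*u + 2*u^2) + 2*(2*u + 2*u^2)^2 :=
    exp_quad hy0 hyhalf
  have hb0 : (0:ℝ) ≤ 2*u := by positivity
  have hbhalf : 2*u ≤ 1/2 := by nlinarith
  have hblo : 2*u + 1 ≤ Real.exp (2*u) := Real.add_one_le_exp _
  have hbhi : Real.exp (2*u) ≤ 1 + 2*u + 2*(2*u)^2 := exp_quad hb0 hbhalf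
  obtain ⟨d, hd⟩ : ∃ d, d = Real.exp (2*u + (2*u + 2*u^2)) - Real.exp (2*u) := ⟨_, rfl⟩
  rw [← hd]
  have hdeq : d = Real.exp (2*u) * (Real.exp (2*u + 2*u^2) - 1) := by
    rw [hd, Real.exp_add]; ring
  have hdlo : 2*u ≤ d := by
    rw [hdeq]; nlinarith [Real.exp_pos (2*u)]
  have hdhi : d ≤ 2*u + 26*u^2 := by
    rw [hdeq]
    have h1 : Real.exp (2*u + 2*u^2) - 1 ≤ 2*u + 20*u^2 := by nlinarith
    have h2 : 0 ≤ Real.exp (2*u + 2*u^2) - 1 := by nlinarith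
    have key : Real.exp (2*u) * (Real.exp (2*u + 2*u^2) - 1)
        ≤ (1 + 2*u + 8*u^2) * (2*u + 20*u^2) := by
      have h8 : Real.exp (2*u) ≤ 1 + 2*u + 8*u^2 := by nlinarith
      exact mul_le_mul h8 h1 h2 (by positivity)
    have h3 : 35*u*u^2 ≤ u^2 := by nlinarith
    have h4 : 1225*(u^2*u^2) ≤ u^2 := by nlinarith
    nlinarith [key]
  have hsu0 : 0 < Real.sqrt u := Real.sqrt_pos.mpr hu0
  have hsu2 : (Real.sqrt u)^2 = u := Real.sq_sqrt hu0.le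
  have husu : u ≤ Real.sqrt u := by
    rw [Real.le_sqrt hu0.le hu0.le]; nlinarith
  have hS2 : (Real.sqrt (2*u))^2 = 2*u := Real.sq_sqrt hb0
  have hS0 : 0 ≤ Real.sqrt (2*u) := Real.sqrt_nonneg _
  have hS_eq : Real.sqrt (2*u) = Real.sqrt 2 * Real.sqrt u :=
    Real.sqrt_mul (by norm_num) u
  have hsqrt2 : Real.sqrt 2 ≤ 1.5 := by
    nlinarith [Real.sq_sqrt (by norm_num : (0:ℝ) ≤ 2), Real.sqrt_nonneg 2]
  have hsqrt2' : (0:ℝ) ≤ Real.sqrt 2 := Real.sqrt_nonneg 2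
  have hRlo : Real.sqrt (2*u) ≤ Real.sqrt d := Real.sqrt_le_sqrt hdlo
  have hub0 : 0 ≤ Real.sqrt (2*u) * (1 + 7*u) := by positivity
  have hRhi : Real.sqrt d ≤ Real.sqrt (2*u) * (1 + 7*u) := by
    have hsq : d ≤ (Real.sqrt (2*u) * (1 + 7*u))^2 := by
      have he : (Real.sqrt (2*u) * (1 + 7*u))^2 = (2*u) * (1 + 7*u)^2 := by
        rw [mul_pow, hS2]
      rw [he]; nlinarith
    exact (Real.sqrt_le_sqrt hsq).trans_eq (Real.sqrt_sq hub0)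
  rw [abs_le]
  constructor
  · nlinarith
  · have h1 : Real.sqrt d - Real.sqrt (2*u) ≤ Real.sqrt (2*u) * (7*u) := by nlinarith
    have h2 : Real.sqrt (2*u) * (7*u) = 7 * Real.sqrt 2 * (Real.sqrt u * u) := by
      rw [hS_eq]; ring
    nlinarith

lemma main_bound (k : ℕ) (hk : 35 ≤ k) :
    |sK k - (1 - Real.sqrt (2 / (k : ℝ)) + 2 / (k : ℝ))| ≤ 30 * (k:ℝ) ^ (-(3:ℝ)/2) ∧
    |tK k - (1 + Real.sqrt (2 / (k : ℝ)) + 2 / (k : ℝ))| ≤ 30 * (k:ℝ) ^ (-(3:ℝ)/2) := by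
  have hr : (35:ℝ) ≤ (k:ℝ) := by exact_mod_cast hk
  have hr0 : (0:ℝ) < (k:ℝ) := by linarith
  have hu0 : 0 < (k:ℝ)⁻¹ := by positivity
  have hu35 : 35 * (k:ℝ)⁻¹ ≤ 1 := by
    rw [mul_inv_le_iff₀ hr0, one_mul]; exact hr
  have harg1 : (2*(k:ℝ)+1)/(k:ℝ)^2 = 2*(k:ℝ)⁻¹ + ((k:ℝ)⁻¹)^2 := by
    field_simp
  have harg2 : (4*(k:ℝ)+2)/(k:ℝ)^2 = 2*(k:ℝ)⁻¹ + (2*(k:ℝ)⁻¹ + 2*((k:ℝ)⁻¹)^2) := by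
    field_simp; ring
  have harg3 : 2/(k:ℝ) = 2*(k:ℝ)⁻¹ := by rw [div_eq_mul_inv]
  have hE := aux_E hu0 hu35
  have hR := aux_R hu0 hu35
  have hpow : (k:ℝ) ^ (-(3:ℝ)/2) = (k:ℝ)⁻¹ * Real.sqrt (k:ℝ)⁻¹ := by
    rw [show (-(3:ℝ)/2) = -(1 + 1/2) by norm_num, Real.rpow_neg hr0.le,
      Real.rpow_add hr0, Real.rpow_one, ← Real.sqrt_eq_rpow, mul_inv, ← Real.sqrt_inv]
  constructor
  · unfold sK
    rw [harg1, harg2, harg3]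
    have heq : Real.exp (2*(k:ℝ)⁻¹ + ((k:ℝ)⁻¹)^2) -
        Real.sqrt (Real.exp (2*(k:ℝ)⁻¹ + (2*(k:ℝ)⁻¹ + 2*((k:ℝ)⁻¹)^2)) - Real.exp (2*(k:ℝ)⁻¹)) -
        (1 - Real.sqrt (2*(k:ℝ)⁻¹) + 2*(k:ℝ)⁻¹) =
        (Real.exp (2*(k:ℝ)⁻¹ + ((k:ℝ)⁻¹)^2) - (1 + 2*(k:ℝ)⁻¹)) -
        (Real.sqrt (Real.exp (2*(k:ℝ)⁻¹ + (2*(k:ℝ)⁻¹ + 2*((k:ℝ)⁻¹)^2)) - Real.exp (2*(k:ℝ)⁻¹)) -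
          Real.sqrt (2*(k:ℝ)⁻¹)) := by ring
    rw [heq, hpow]
    refine (abs_sub _ _).trans ?_
    have := add_le_add hE hR
    linarith
  · unfold tK
    rw [harg1, harg2, harg3]
    have heq : Real.exp (2*(k:ℝ)⁻¹ + ((k:ℝ)⁻¹)^2) +
        Real.sqrt (Real.exp (2*(k:ℝ)⁻¹ + (2*(k:ℝ)⁻¹ + 2*((k:ℝ)⁻¹)^2)) - Real.exp (2*(k:ℝ)⁻¹)) -
        (1 + Real.sqrt (2*(k:ℝ)⁻¹) + 2*(k:ℝ)⁻¹) =
        (Real.exp (2*(k:ℝ)⁻¹ + ((k:ℝ)⁻¹)^2) - (1 + 2*(k:ℝ)⁻¹)) +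
        (Real.sqrt (Real.exp (2*(k:ℝ)⁻¹ + (2*(k:ℝ)⁻¹ + 2*((k:ℝ)⁻¹)^2)) - Real.exp (2*(k:ℝ)⁻¹)) -
          Real.sqrt (2*(k:ℝ)⁻¹)) := by ring
    rw [heq, hpow]
    refine (abs_add_le _ _).trans ?_
    have := add_le_add hE hR
    linarith


open Asymptotics Filter

theorem mrs_numbers_asymptotics :
    (fun k : ℕ => sK k - (1 - Real.sqrt (2 / (k : ℝ)) + 2 / (k : ℝ))) =O[atTop]
        (fun k : ℕ => ((k : ℝ)) ^ (-(3 : ℝ) / 2)) ∧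
      (fun k : ℕ => tK k - (1 + Real.sqrt (2 / (k : ℝ)) + 2 / (k : ℝ))) =O[atTop]
        (fun k : ℕ => ((k : ℝ)) ^ (-(3 : ℝ) / 2)) := by
  constructor
  · rw [isBigO_iff]
    refine ⟨30, ?_⟩
    filter_upwards [eventually_ge_atTop 35] with k hk
    have h := (main_bound k hk).1
    have hpos : (0:ℝ) ≤ (k:ℝ) ^ (-(3:ℝ)/2) :=
      Real.rpow_nonneg (Nat.cast_nonneg k) _
    rw [Real.norm_eq_abs, Real.norm_eq_abs, abs_of_nonneg hpos]
    exact h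
  · rw [isBigO_iff]
    refine ⟨30, ?_⟩
    filter_upwards [eventually_ge_atTop 35] with k hk
    have h := (main_bound k hk).2
    have hpos : (0:ℝ) ≤ (k:ℝ) ^ (-(3:ℝ)/2) :=
      Real.rpow_nonneg (Nat.cast_nonneg k) _
    rw [Real.norm_eq_abs, Real.norm_eq_abs, abs_of_nonneg hpos]
    exact h
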